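/- Let F be the class of autoregressive next-bit predictors f_a, indexed by infinite binary sequences a ∈ {0,1}^ℕ, where f_a(x) = a_{|x|+1} if x is a prefix of a and f_a(x) = 0 otherwise. Then VC(F) ≤ 1; that is, no two distinct binary strings are simultaneously shattered by F. -/
import Mathlib


/-- The autoregressive next-bit predictor indexed by the infinite sequence `a`:
it outputs the next bit of `a` on prefixes of `a`, and `0` (i.e. `false`) elsewhere. -/
def fa (a : ℕ → Bool) (x : List Bool) : Bool :=
  if x = List.ofFn (fun i : Fin x.length => a i) then a x.length else false

lemma fa_true {a : ℕ → Bool} {x : List Bool} (h : fa a x = true) :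
    x = List.ofFn (fun i : Fin x.length => a i) ∧ a x.length = true := by
  unfold fa at h
  split at h
  · exact ⟨by assumption, h⟩
  · simp at h

lemma fa_get {a : ℕ → Bool} {x : List Bool} (h : fa a x = true)
    {i : ℕ} (hi : i < x.length) : x[i] = a i := by
  rw [List.getElem_of_eq (fa_true h).1 hi, List.getElem_ofFn]

lemma aux14 (x₁ x₂ : List Bool) (hlt : x₁.length < x₂.length)
    (h : ∀ y₁ y₂ : Bool, ∃ a : ℕ → Bool, fa a x₁ = y₁ ∧ fa a x₂ = y₂) : False := by
  obtain ⟨a, ha1, ha2⟩ := h true true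
  -- the bit of x₂ at position |x₁| is `true`
  have hprefix : ∀ i (hi : i < x₁.length), x₂[i]'(hi.trans hlt) = x₁[i] := by
    intro i hi
    rw [fa_get ha1 hi, fa_get ha2 (lt_trans hi hlt)]
  have hbit : x₂[x₁.length]'hlt = true := by
    rw [fa_get ha2 hlt]
    exact (fa_true ha1).2
  obtain ⟨b, hb1, hb2⟩ := h false true
  -- x₁ is a prefix of b as well
  have hb1' : fa b x₁ = true := by
    have hx1 : x₁ = List.ofFn (fun i : Fin x₁.length => b i) := by
      apply List.ext_getElem (by simp)
      intro i h1 h2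
      simp only [List.getElem_ofFn]
      rw [← fa_get hb2 (lt_trans h1 hlt), hprefix i h1]
    have hbit' : b x₁.length = true := by
      rw [← fa_get hb2 hlt, hbit]
    unfold fa
    rw [if_pos hx1, hbit']
  rw [hb1'] at hb1
  simp at hb1

/-- The class `{f_a : a ∈ {0,1}^ℕ}` has VC dimension at most 1: no pair of distinct
strings is shattered. -/
theorem stmt_14 (x₁ x₂ : List Bool) (hne : x₁ ≠ x₂) :
    ¬ (∀ y₁ y₂ : Bool, ∃ a : ℕ → Bool, fa a x₁ = y₁ ∧ fa a x₂ = y₂) := by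
  intro h
  rcases lt_trichotomy x₁.length x₂.length with hlt | heq | hgt
  · exact aux14 x₁ x₂ hlt h
  · obtain ⟨a, ha1, ha2⟩ := h true true
    apply hne
    apply List.ext_getElem heq
    intro i h1 h2
    rw [fa_get ha1 h1, fa_get ha2 h2]
  · exact aux14 x₂ x₁ hgt (fun y₁ y₂ => (h y₂ y₁).imp (fun a ⟨p, q⟩ => ⟨q, p⟩))
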